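/- Let ε, δ > 0, λ ∈ ℝ, λ ≠ 0, α, β, ρ, σ : ℤ → ℝ, and define a_n = ε Σ_k^n α_k, b_n = ε Σ_k^n β_k, c_n = ε Σ_k^n a_k β_k, r_m = δ Σ_k^m ρ_k, s_m = δ Σ_k^m σ_k, t_m = δ Σ_k^m r_k σ_k (bidirectional sums), F⁺_n = [[1,0,0],[b_nλ,1,0],[c_nλ², a_nλ,1]], G⁻_m = [[1, s_mλ⁻¹, 0],[0,1,0],[r_mλ⁻¹, t_mλ⁻², 1]]. Fix (n, m) ∈ ℤ² with 1 − b_n s_m ≠ 0 and define V⁺_{n,m} = [[1,0,0],[b_n(1−b_ns_m)⁻¹λ, 1, 0],[c_n(1−b_ns_m)⁻¹λ², (a_n − s_m(a_nb_n − c_n))λ, 1]] and V⁻_{n,m} = [[(1−b_ns_m)⁻¹, s_mλ⁻¹, 0],[0, 1−b_ns_m, 0],[(r_m + b_nt_m(1−b_ns_m)⁻¹)λ⁻¹, t_mλ⁻², 1]]. Then F⁺_n · V⁻_{n,m} = G⁻_m · V⁺_{n,m} (equivalently, (G⁻_m)⁻¹F⁺_n = V⁺_{n,m}(V⁻_{n,m})⁻¹),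 and det V⁺_{n,m} = det V⁻_{n,m} = 1. -/

import Mathlib

/-- Bidirectional sum: `Σ_k^n x_k = Σ_{k=1}^n x_k` for `n ≥ 1`, `0` for `n = 0`, and
`−Σ_{k=n+1}^0 x_k` for `n ≤ −1`. -/
noncomputable def bsum (x : ℤ → ℝ) (n : ℤ) : ℝ :=
  if 1 ≤ n then ∑ k ∈ Finset.Icc (1:ℤ) n, x k
  else if n = 0 then 0
  else -∑ k ∈ Finset.Icc (n+1) (0:ℤ), x k

/-- Explicit Birkhoff decomposition `(G⁻_m)⁻¹ F⁺_n = V⁺_{n,m} (V⁻_{n,m})⁻¹` on the big cell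
`1 − b_n s_m ≠ 0` for discrete indefinite improper affine spheres. -/
theorem stmt10 (ε δ : ℝ) (hε : 0 < ε) (hδ : 0 < δ) (lam : ℝ) (hlam : lam ≠ 0)
    (α β ρ σ : ℤ → ℝ)
    (a b c r s t : ℤ → ℝ)
    (ha : ∀ n, a n = ε * bsum α n)
    (hb : ∀ n, b n = ε * bsum β n)
    (hc : ∀ n, c n = ε * bsum (fun k => a k * β k) n)
    (hr : ∀ m, r m = δ * bsum ρ m)
    (hs : ∀ m, s m = δ * bsum σ m)
    (ht : ∀ m, t m = δ * bsum (fun k => r k * σ k) m)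
    (Fp Gm : ℤ → Matrix (Fin 3) (Fin 3) ℝ)
    (hFp : ∀ n, Fp n = !![1, 0, 0;
                          b n * lam, 1, 0;
                          c n * lam ^ 2, a n * lam, 1])
    (hGm : ∀ m, Gm m = !![1, s m * lam⁻¹, 0;
                          0, 1, 0;
                          r m * lam⁻¹, t m * lam⁻¹ ^ 2, 1])
    (n m : ℤ) (hbs : 1 - b n * s m ≠ 0)
    (Vp Vm : Matrix (Fin 3) (Fin 3) ℝ)
    (hVp : Vp = !![1, 0, 0;
                   b n * (1 - b n * s m)⁻¹ * lam, 1, 0;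
                   c n * (1 - b n * s m)⁻¹ * lam ^ 2,
                     (a n - s m * (a n * b n - c n)) * lam, 1])
    (hVm : Vm = !![(1 - b n * s m)⁻¹, s m * lam⁻¹, 0;
                   0, 1 - b n * s m, 0;
                   (r m + b n * t m * (1 - b n * s m)⁻¹) * lam⁻¹, t m * lam⁻¹ ^ 2, 1]) :
    Fp n * Vm = Gm m * Vp ∧ (Gm m)⁻¹ * Fp n = Vp * Vm⁻¹ ∧
      Vp.det = 1 ∧ Vm.det = 1 := by

  have hmain : Fp n * Vm = Gm m * Vp := by
    rw [hFp, hGm, hVp, hVm]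
    ext i j
    fin_cases i <;> fin_cases j <;>
      simp [Matrix.mul_apply, Fin.sum_univ_succ] <;>
      field_simp <;> ring
  have hdVp : Vp.det = 1 := by
    rw [hVp, Matrix.det_fin_three]; simp
  have hdVm : Vm.det = 1 := by
    rw [hVm, Matrix.det_fin_three]
    simp [hbs]
  have hdGm : (Gm m).det = 1 := by
    rw [hGm, Matrix.det_fin_three]; simp
  refine ⟨hmain, ?_, hdVp, hdVm⟩
  have hGinv : IsUnit (Gm m).det := by rw [hdGm]; exact isUnit_one
  have hVminv : IsUnit Vm.det := by rw [hdVm]; exact isUnit_one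
  calc (Gm m)⁻¹ * Fp n = (Gm m)⁻¹ * (Fp n * Vm) * Vm⁻¹ := by
        rw [Matrix.mul_assoc, Matrix.mul_assoc, Matrix.mul_nonsing_inv _ hVminv, Matrix.mul_one]
    _ = (Gm m)⁻¹ * (Gm m * Vp) * Vm⁻¹ := by rw [hmain]
    _ = Vp * Vm⁻¹ := by
        rw [← Matrix.mul_assoc, Matrix.nonsing_inv_mul _ hGinv, Matrix.one_mul]
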